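/- Let P be a down-finite distributive lattice (for every a ∈ P the set {x : x ≤ a} is finite), 𝔽 a field, and F : P → Vec_𝔽 a functor that is monomorphic and codegree 1, meaning that for all x, y ∈ P the square F(x∧y), F(x), F(y), F(x∨y) is a pushout square of vector spaces. Then F is a projective object in Fun(P, Vec_𝔽). -/

import Mathlib

open CategoryTheory CategoryTheory.Limits


section Aux

variable {P : Type*} [DistribLattice P] {𝔽 : Type*} [Field 𝔽]

/-- down-finite implies well-founded `<` -/
lemma aux_wf (hdf : ∀ a : P, {x : P | x ≤ a}.Finite) : WellFounded ((· < ·) : P → P → Prop) := by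
  constructor
  intro a
  have key : ∀ n : ℕ, ∀ a : P, (hdf a).toFinset.card ≤ n → Acc (· < ·) a := by
    intro n
    induction n with
    | zero =>
      intro a ha
      exfalso
      have : a ∈ (hdf a).toFinset := by simp
      have := Finset.card_pos.mpr ⟨a, this⟩
      omega
    | succ n ih =>
      intro a ha
      constructor
      intro b hb
      apply ih
      have hsub : (hdf b).toFinset ⊆ (hdf a).toFinset := by
        intro x hx
        simp only [Set.Finite.mem_toFinset, Set.mem_setOf_eq] at *
        exact hx.trans hb.le
      have hne : a ∉ (hdf b).toFinset := by
        simp only [Set.Finite.mem_toFinset, Set.mem_setOf_eq]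
        exact fun h => absurd (h.trans_lt hb) (lt_irrefl a)
      have : (hdf b).toFinset.card < (hdf a).toFinset.card :=
        Finset.card_lt_card (Finset.ssubset_iff_of_subset hsub |>.mpr ⟨a, by simp, hne⟩)
      omega
  exact key _ a le_rfl

variable (F : P ⥤ ModuleCat 𝔽)

lemma fcomp {x y z : P} (h1 : x ≤ y) (h2 : y ≤ z) (u : F.obj x) :
    F.map (homOfLE h2) (F.map (homOfLE h1) u) = F.map (homOfLE (h1.trans h2)) u := by
  rw [← homOfLE_comp h1 h2, F.map_comp]; rfl

lemma finj (hmono : ∀ {x y : P} (h : x ≤ y), Mono (F.map (homOfLE h))) {x y : P} (h : x ≤ y) :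
    Function.Injective (F.map (homOfLE h)) := by
  have := hmono h
  exact (ModuleCat.mono_iff_injective _).mp this

end Aux


section Aux2
variable {P : Type*} [DistribLattice P] {𝔽 : Type*} [Field 𝔽] (F : P ⥤ ModuleCat 𝔽)

/-- pushout implies jointly surjective -/
lemma aux_rangeSupTop {x y : P}
    (hp : IsPushout (F.map (homOfLE (inf_le_left : x ⊓ y ≤ x)))
      (F.map (homOfLE (inf_le_right : x ⊓ y ≤ y)))
      (F.map (homOfLE (le_sup_left : x ≤ x ⊔ y)))
      (F.map (homOfLE (le_sup_right : y ≤ x ⊔ y)))) :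
    LinearMap.range (F.map (homOfLE (le_sup_left : x ≤ x ⊔ y))).hom ⊔
      LinearMap.range (F.map (homOfLE (le_sup_right : y ≤ x ⊔ y))).hom = ⊤ := by
  set S := LinearMap.range (F.map (homOfLE (le_sup_left : x ≤ x ⊔ y))).hom ⊔
      LinearMap.range (F.map (homOfLE (le_sup_right : y ≤ x ⊔ y))).hom with hS
  let T := ModuleCat.of 𝔽 (↥(F.obj (x ⊔ y)) ⧸ S)
  let q : F.obj (x ⊔ y) ⟶ T := ModuleCat.ofHom S.mkQ
  have h0 : q = (0 : F.obj (x ⊔ y) ⟶ T) := by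
    apply hp.hom_ext
    · apply ModuleCat.hom_ext; apply LinearMap.ext; intro u
      show S.mkQ (F.map (homOfLE (le_sup_left : x ≤ x ⊔ y)) u) = 0
      rw [Submodule.mkQ_apply, Submodule.Quotient.mk_eq_zero]
      exact Submodule.mem_sup_left (LinearMap.mem_range_self _ u)
    · apply ModuleCat.hom_ext; apply LinearMap.ext; intro u
      show S.mkQ (F.map (homOfLE (le_sup_right : y ≤ x ⊔ y)) u) = 0
      rw [Submodule.mkQ_apply, Submodule.Quotient.mk_eq_zero]
      exact Submodule.mem_sup_right (LinearMap.mem_range_self _ u)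
  rw [eq_top_iff]
  intro v _
  have h : S.mkQ v = (0 : _ →ₗ[𝔽] _) v :=
    LinearMap.congr_fun (congrArg ModuleCat.Hom.hom h0 : (S.mkQ : _ →ₗ[𝔽] _) = 0) v
  rw [LinearMap.zero_apply] at h
  exact (Submodule.Quotient.mk_eq_zero S).mp h

/-- pushout implies: equal images come from the intersection -/
lemma aux_pushoutInt {x y : P}
    (hp : IsPushout (F.map (homOfLE (inf_le_left : x ⊓ y ≤ x)))
      (F.map (homOfLE (inf_le_right : x ⊓ y ≤ y)))
      (F.map (homOfLE (le_sup_left : x ≤ x ⊔ y)))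
      (F.map (homOfLE (le_sup_right : y ≤ x ⊔ y))))
    (u : F.obj x) (v : F.obj y)
    (huv : F.map (homOfLE (le_sup_left : x ≤ x ⊔ y)) u
         = F.map (homOfLE (le_sup_right : y ≤ x ⊔ y)) v) :
    ∃ w : F.obj (x ⊓ y), F.map (homOfLE (inf_le_left : x ⊓ y ≤ x)) w = u ∧
      F.map (homOfLE (inf_le_right : x ⊓ y ≤ y)) w = v := by
  set f := ((F.map (homOfLE (inf_le_left : x ⊓ y ≤ x))).hom : F.obj (x ⊓ y) →ₗ[𝔽] F.obj x)
  set g := ((F.map (homOfLE (inf_le_right : x ⊓ y ≤ y))).hom : F.obj (x ⊓ y) →ₗ[𝔽] F.obj y)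
  set δ : F.obj (x ⊓ y) →ₗ[𝔽] ↥(F.obj x) × ↥(F.obj y) :=
    ((LinearMap.inl 𝔽 (F.obj x) (F.obj y)).comp f) - ((LinearMap.inr 𝔽 (F.obj x) (F.obj y)).comp g)
    with hδ
  set N := LinearMap.range δ with hN
  let T := ModuleCat.of 𝔽 ((↥(F.obj x) × ↥(F.obj y)) ⧸ N)
  let α : F.obj x ⟶ T := ModuleCat.ofHom <| N.mkQ.comp (LinearMap.inl 𝔽 _ _)
  let β : F.obj y ⟶ T := ModuleCat.ofHom <| N.mkQ.comp (LinearMap.inr 𝔽 _ _)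
  have hw : F.map (homOfLE (inf_le_left : x ⊓ y ≤ x)) ≫ α
      = F.map (homOfLE (inf_le_right : x ⊓ y ≤ y)) ≫ β := by
    apply ModuleCat.hom_ext; apply LinearMap.ext; intro w
    show N.mkQ ((f w, 0)) = N.mkQ ((0, g w))
    rw [← sub_eq_zero, ← map_sub, Submodule.mkQ_apply, Submodule.Quotient.mk_eq_zero]
    exact ⟨w, by simp [hδ]⟩
  let γ := hp.desc α β hw
  have h1 : ∀ u, γ (F.map (homOfLE (le_sup_left : x ≤ x ⊔ y)) u) = α u := by
    intro u
    exact LinearMap.congr_fun (congrArg ModuleCat.Hom.hom (hp.inl_desc α β hw : _ ≫ γ = α) :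
      (γ.hom.comp (F.map (homOfLE (le_sup_left : x ≤ x ⊔ y))).hom : _ →ₗ[𝔽] _) = α.hom) u
  have h2 : ∀ v, γ (F.map (homOfLE (le_sup_right : y ≤ x ⊔ y)) v) = β v := by
    intro v
    exact LinearMap.congr_fun (congrArg ModuleCat.Hom.hom (hp.inr_desc α β hw : _ ≫ γ = β) :
      (γ.hom.comp (F.map (homOfLE (le_sup_right : y ≤ x ⊔ y))).hom : _ →ₗ[𝔽] _) = β.hom) v
  have : α u = β v := by rw [← h1, ← h2, huv]
  have hmem : (u, -v) ∈ N := by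
    have : N.mkQ ((u, 0) - (0, v)) = 0 := by
      rw [map_sub, sub_eq_zero]; exact this
    rwa [Submodule.mkQ_apply, Submodule.Quotient.mk_eq_zero, Prod.mk_sub_mk, sub_zero,
      zero_sub] at this
  obtain ⟨w, hw'⟩ := hmem
  refine ⟨w, ?_, ?_⟩
  · have := congrArg Prod.fst hw'; simpa [hδ] using this
  · have := congrArg Prod.snd hw'; simp [hδ] at this
    exact this
end Aux2


section Aux3
variable {R M : Type*} [Field R] [AddCommGroup M] [Module R M]

lemma aux_mem_finset_sup {ι : Type*} (N : ι → Submodule R M) (t : Finset ι) (z : M)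
    (hz : z ∈ t.sup N) : ∃ c : ι → M, (∀ i, c i ∈ N i) ∧ z = ∑ i ∈ t, c i := by
  classical
  induction t using Finset.cons_induction generalizing z with
  | empty =>
    refine ⟨fun _ => 0, fun i => zero_mem _, ?_⟩
    simpa using hz
  | cons a s ha ih =>
    rw [Finset.sup_cons] at hz
    obtain ⟨u, hu, w, hw, rfl⟩ := Submodule.mem_sup.mp hz
    obtain ⟨c, hc, hcw⟩ := ih w hw
    refine ⟨Function.update c a u, fun i => ?_, ?_⟩
    · by_cases hia : i = a
      · subst hia; rw [Function.update_self]; exact hu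
      · rw [Function.update_of_ne hia]; exact hc i
    · rw [Finset.sum_cons, Function.update_self, hcw]
      congr 1
      exact Finset.sum_congr rfl fun i hi =>
        (Function.update_of_ne (fun h : i = a => ha (h ▸ hi)) u c).symm
end Aux3
section Aux4
variable {P : Type*} [DistribLattice P] {𝔽 : Type*} [Field 𝔽] (F : P ⥤ ModuleCat 𝔽)

open Classical in
/-- total range function -/
noncomputable def rng (b c : P) : Submodule 𝔽 ↑(F.obj c) :=
  if h : b ≤ c then LinearMap.range (F.map (homOfLE h)).hom else ⊥

lemma rng_eq {b c : P} (h : b ≤ c) :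
    rng F b c = LinearMap.range (F.map (homOfLE h)).hom := by
  rw [rng, dif_pos h]

lemma fcomp_eq {x y z : P} (h1 : x ≤ y) (h2 : y ≤ z) :
    ((F.map (homOfLE (h1.trans h2))).hom : F.obj x →ₗ[𝔽] F.obj z)
      = (F.map (homOfLE h2)).hom.comp (F.map (homOfLE h1)).hom := by
  rw [← homOfLE_comp h1 h2, F.map_comp]; rfl

lemma rng_le_rng {x y a : P} (hxy : x ≤ y) (hya : y ≤ a) : rng F x a ≤ rng F y a := by
  rw [rng_eq F (hxy.trans hya), rng_eq F hya, fcomp_eq F hxy hya, LinearMap.range_comp]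
  exact LinearMap.map_le_range

lemma mem_rng {x a : P} (h : x ≤ a) (u : F.obj x) : F.map (homOfLE h) u ∈ rng F x a := by
  rw [rng_eq F h]; exact LinearMap.mem_range_self _ u

lemma aux_rangeSup2
    (hpo : ∀ x y : P, IsPushout (F.map (homOfLE (inf_le_left : x ⊓ y ≤ x)))
      (F.map (homOfLE (inf_le_right : x ⊓ y ≤ y)))
      (F.map (homOfLE (le_sup_left : x ≤ x ⊔ y)))
      (F.map (homOfLE (le_sup_right : y ≤ x ⊔ y))))
    {x y a : P} (hxa : x ≤ a) (hya : y ≤ a) :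
    rng F (x ⊔ y) a = rng F x a ⊔ rng F y a := by
  rw [rng_eq F (sup_le hxa hya), rng_eq F hxa, rng_eq F hya]
  have h1 : ((F.map (homOfLE hxa)).hom : F.obj x →ₗ[𝔽] F.obj a)
      = (F.map (homOfLE (sup_le hxa hya))).hom.comp
          (F.map (homOfLE (le_sup_left : x ≤ x ⊔ y))).hom :=
    fcomp_eq F le_sup_left (sup_le hxa hya)
  have h2 : ((F.map (homOfLE hya)).hom : F.obj y →ₗ[𝔽] F.obj a)
      = (F.map (homOfLE (sup_le hxa hya))).hom.comp
          (F.map (homOfLE (le_sup_right : y ≤ x ⊔ y))).hom :=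
    fcomp_eq F le_sup_right (sup_le hxa hya)
  rw [h1, h2, LinearMap.range_comp, LinearMap.range_comp, ← Submodule.map_sup,
    aux_rangeSupTop F (hpo x y), Submodule.map_top]

lemma aux_rangeSupFin
    (hpo : ∀ x y : P, IsPushout (F.map (homOfLE (inf_le_left : x ⊓ y ≤ x)))
      (F.map (homOfLE (inf_le_right : x ⊓ y ≤ y)))
      (F.map (homOfLE (le_sup_left : x ≤ x ⊔ y)))
      (F.map (homOfLE (le_sup_right : y ≤ x ⊔ y))))
    {ι : Type*} (t : Finset ι) (hne : t.Nonempty) (v : ι → P) {a : P}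
    (hva : ∀ x ∈ t, v x ≤ a) :
    rng F (t.sup' hne v) a = t.sup (fun x => rng F (v x) a) := by
  classical
  induction hne using Finset.Nonempty.cons_induction with
  | singleton b => simp only [Finset.sup'_singleton, Finset.sup_singleton]
  | cons b s hb hs ih =>
    have hvb : v b ≤ a := hva b (Finset.mem_cons_self b s)
    have hvs : ∀ x ∈ s, v x ≤ a := fun x hx => hva x (Finset.mem_cons.mpr (Or.inr hx))
    rw [Finset.sup'_cons hs, Finset.sup_cons,
      aux_rangeSup2 F hpo hvb (Finset.sup'_le hs v hvs), ih hvs]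
end Aux4
section Aux5
variable {P : Type*} [DistribLattice P] {𝔽 : Type*} [Field 𝔽] (F : P ⥤ ModuleCat 𝔽)

open Classical in
/-- total map function -/
noncomputable def fmapo (x a : P) : F.obj x →ₗ[𝔽] F.obj a :=
  if h : x ≤ a then ((F.map (homOfLE h)).hom : F.obj x →ₗ[𝔽] F.obj a) else 0

lemma fmapo_eq {x a : P} (h : x ≤ a) :
    fmapo F x a = ((F.map (homOfLE h)).hom : F.obj x →ₗ[𝔽] F.obj a) := by
  rw [fmapo, dif_pos h]

lemma fmapo_fmap {x y a : P} (h1 : x ≤ y) (h2 : y ≤ a) (u : F.obj x) :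
    fmapo F y a (F.map (homOfLE h1) u) = fmapo F x a u := by
  rw [fmapo_eq F h2, fmapo_eq F (h1.trans h2)]; exact fcomp F h1 h2 u

lemma aux_K (G : P ⥤ ModuleCat 𝔽)
    (hmono : ∀ {x y : P} (h : x ≤ y), Mono (F.map (homOfLE h)))
    (hpo : ∀ x y : P, IsPushout (F.map (homOfLE (inf_le_left : x ⊓ y ≤ x)))
      (F.map (homOfLE (inf_le_right : x ⊓ y ≤ y)))
      (F.map (homOfLE (le_sup_left : x ≤ x ⊔ y)))
      (F.map (homOfLE (le_sup_right : y ≤ x ⊔ y))))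
    {a : P} (h : ∀ x : P, F.obj x →ₗ[𝔽] G.obj x)
    (hcomp : ∀ (x y : P) (hxy : x ≤ y), y < a →
      (h y).comp ((F.map (homOfLE hxy)).hom : F.obj x →ₗ[𝔽] F.obj y)
        = (((G.map (homOfLE hxy)).hom : G.obj x →ₗ[𝔽] G.obj y)).comp (h x))
    (t : Finset P) (ht : ∀ x ∈ t, x < a) (u : ∀ x : P, F.obj x)
    (hsum : ∑ x ∈ t, fmapo F x a (u x) = 0) :
    ∑ x ∈ t, fmapo G x a (h x (u x)) = 0 := by
  classical
  induction t using Finset.cons_induction generalizing u with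
  | empty => simp
  | cons x₁ s hx₁ ih =>
    have hx₁a : x₁ < a := ht x₁ (Finset.mem_cons_self x₁ s)
    have hs : ∀ x ∈ s, x < a := fun x hx => ht x (Finset.mem_cons.mpr (Or.inr hx))
    rw [Finset.sum_cons] at hsum
    rw [Finset.sum_cons]
    rcases s.eq_empty_or_nonempty with rfl | hse
    · simp only [Finset.sum_empty, add_zero] at hsum ⊢
      rw [fmapo_eq F hx₁a.le] at hsum
      have : u x₁ = 0 := by
        apply finj F hmono hx₁a.le
        rw [hsum, map_zero]
      rw [this, map_zero, map_zero]
    · set y := s.sup' hse id with hy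
      have hya : y ≤ a := Finset.sup'_le hse id (fun x hx => (hs x hx).le)
      have hmem : fmapo F x₁ a (u x₁) ∈ rng F y a := by
        have hneg : fmapo F x₁ a (u x₁) = -∑ x ∈ s, fmapo F x a (u x) :=
          eq_neg_of_add_eq_zero_left hsum
        rw [hneg]
        refine neg_mem (Submodule.sum_mem _ fun x hx => ?_)
        refine rng_le_rng F (Finset.le_sup' id hx) hya ?_
        rw [fmapo_eq F (hs x hx).le]
        exact mem_rng F (hs x hx).le (u x)
      rw [rng_eq F hya] at hmem
      obtain ⟨v, hv⟩ := hmem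
      have heq : F.map (homOfLE (le_sup_left : x₁ ≤ x₁ ⊔ y)) (u x₁)
          = F.map (homOfLE (le_sup_right : y ≤ x₁ ⊔ y)) v := by
        apply finj F hmono (sup_le hx₁a.le hya : x₁ ⊔ y ≤ a)
        rw [fcomp F (le_sup_left : x₁ ≤ x₁ ⊔ y) (sup_le hx₁a.le hya),
          fcomp F (le_sup_right : y ≤ x₁ ⊔ y) (sup_le hx₁a.le hya)]
        rw [fmapo_eq F hx₁a.le] at hv
        exact hv.symm
      obtain ⟨w, hw1, -⟩ := aux_pushoutInt F (hpo x₁ y) (u x₁) v heq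
      have hxy : x₁ ⊓ y = s.sup' hse (fun i => x₁ ⊓ i) :=
        Finset.sup'_inf_distrib_left hse id x₁
      have hmem2 : u x₁ ∈ rng F (x₁ ⊓ y) x₁ := by
        rw [rng_eq F inf_le_left]; exact ⟨w, hw1⟩
      rw [hxy, aux_rangeSupFin F hpo s hse (fun i => x₁ ⊓ i)
        (fun x _ => inf_le_left)] at hmem2
      obtain ⟨c, hc, hcsum⟩ := aux_mem_finset_sup _ s (u x₁) hmem2
      have hwex : ∀ i : P, ∃ wi : F.obj (x₁ ⊓ i),
          F.map (homOfLE (inf_le_left : x₁ ⊓ i ≤ x₁)) wi = c i := by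
        intro i
        have := hc i
        rw [rng_eq F inf_le_left] at this
        exact this
      choose wf hwf using hwex
      set u' : ∀ x : P, F.obj x :=
        fun x => u x + F.map (homOfLE (inf_le_right : x₁ ⊓ x ≤ x)) (wf x) with hu'
      have key : ∑ x ∈ s, fmapo F x a (u' x) = 0 := by
        have expand : ∀ x ∈ s, fmapo F x a (u' x)
            = fmapo F x a (u x) + fmapo F x₁ a (F.map (homOfLE (inf_le_left : x₁ ⊓ x ≤ x₁)) (wf x)) := by
          intro x hx
          rw [hu']
          simp only [map_add]
          congr 1
          rw [fmapo_fmap F (inf_le_right : x₁ ⊓ x ≤ x) (hs x hx).le,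
            fmapo_fmap F (inf_le_left : x₁ ⊓ x ≤ x₁) hx₁a.le]
        rw [Finset.sum_congr rfl expand, Finset.sum_add_distrib]
        have : ∑ x ∈ s, fmapo F x₁ a (F.map (homOfLE (inf_le_left : x₁ ⊓ x ≤ x₁)) (wf x))
            = fmapo F x₁ a (u x₁) := by
          rw [← map_sum]
          congr 1
          rw [Finset.sum_congr rfl (fun x _ => hwf x), ← hcsum]
        rw [this, add_comm]
        exact hsum
      have ihres := ih hs u' key
      have expandG : ∀ x ∈ s, fmapo G x a ((h x) (u' x))
          = fmapo G x a (h x (u x)) + fmapo G x₁ a (h x₁ (c x)) := by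
        intro x hx
        rw [hu']
        simp only [map_add]
        congr 1
        have e1 : h x (F.map (homOfLE (inf_le_right : x₁ ⊓ x ≤ x)) (wf x))
            = G.map (homOfLE (inf_le_right : x₁ ⊓ x ≤ x)) (h (x₁ ⊓ x) (wf x)) :=
          LinearMap.congr_fun (hcomp (x₁ ⊓ x) x inf_le_right (hs x hx)) (wf x)
        have e2 : h x₁ (c x) = G.map (homOfLE (inf_le_left : x₁ ⊓ x ≤ x₁)) (h (x₁ ⊓ x) (wf x)) := by
          rw [← hwf x]
          exact LinearMap.congr_fun (hcomp (x₁ ⊓ x) x₁ inf_le_left hx₁a) (wf x)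
        rw [e1, e2, fmapo_fmap G (inf_le_right : x₁ ⊓ x ≤ x) (hs x hx).le,
          fmapo_fmap G (inf_le_left : x₁ ⊓ x ≤ x₁) hx₁a.le]
      rw [Finset.sum_congr rfl expandG, Finset.sum_add_distrib] at ihres
      have : ∑ x ∈ s, fmapo G x₁ a (h x₁ (c x)) = fmapo G x₁ a (h x₁ (u x₁)) := by
        rw [← map_sum, ← map_sum, ← hcsum]
      rw [this, add_comm] at ihres
      exact ihres
end Aux5
section Aux6
variable {P : Type*} [DistribLattice P] {𝔽 : Type*} [Field 𝔽] {F G : P ⥤ ModuleCat 𝔽}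

lemma nat_app (f : F ⟶ G) {x y : P} (hxy : x ≤ y) (u : F.obj x) :
    f.app y (F.map (homOfLE hxy) u) = G.map (homOfLE hxy) (f.app x u) :=
  LinearMap.congr_fun (congrArg ModuleCat.Hom.hom (f.naturality (homOfLE hxy) : _ ≫ _ = _ ≫ _) :
    ((f.app y).hom.comp (F.map (homOfLE hxy)).hom : F.obj x →ₗ[𝔽] G.obj y)
      = (G.map (homOfLE hxy)).hom.comp (f.app x).hom) u

lemma aux_step (hdf : ∀ a : P, {x : P | x ≤ a}.Finite)
    (hmono : ∀ {x y : P} (h : x ≤ y), Mono (F.map (homOfLE h)))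
    (hpo : ∀ x y : P, IsPushout (F.map (homOfLE (inf_le_left : x ⊓ y ≤ x)))
      (F.map (homOfLE (inf_le_right : x ⊓ y ≤ y)))
      (F.map (homOfLE (le_sup_left : x ≤ x ⊔ y)))
      (F.map (homOfLE (le_sup_right : y ≤ x ⊔ y))))
    {H : P ⥤ ModuleCat 𝔽} (f : F ⟶ H) (g : G ⟶ H)
    (hgsurj : ∀ p : P, Function.Surjective (g.app p)) (a : P)
    (h : ∀ x : P, F.obj x →ₗ[𝔽] G.obj x)
    (hlift : ∀ x : P, x < a →
      ((g.app x).hom : G.obj x →ₗ[𝔽] H.obj x).comp (h x) = ((f.app x).hom : F.obj x →ₗ[𝔽] H.obj x))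
    (hcomp : ∀ (x y : P) (hxy : x ≤ y), y < a →
      (h y).comp ((F.map (homOfLE hxy)).hom : F.obj x →ₗ[𝔽] F.obj y)
        = (((G.map (homOfLE hxy)).hom : G.obj x →ₗ[𝔽] G.obj y)).comp (h x)) :
    ∃ φ : F.obj a →ₗ[𝔽] G.obj a,
      ((g.app a).hom : G.obj a →ₗ[𝔽] H.obj a).comp φ = ((f.app a).hom : F.obj a →ₗ[𝔽] H.obj a) ∧
      ∀ (x : P) (hx : x < a),
        φ.comp ((F.map (homOfLE hx.le)).hom : F.obj x →ₗ[𝔽] F.obj a)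
          = ((G.map (homOfLE hx.le)).hom : G.obj x →ₗ[𝔽] G.obj a).comp (h x) := by
  classical
  have hfin : {x : P | x < a}.Finite :=
    (hdf a).subset (fun x hx => le_of_lt hx)
  set D : Finset P := hfin.toFinset with hD
  have hmemD : ∀ x : P, x ∈ D ↔ x < a := by
    intro x; rw [hD, Set.Finite.mem_toFinset]; rfl
  let ι := {i : P // i ∈ D}
  set Sm : ((i : ι) → F.obj i.1) →ₗ[𝔽] F.obj a :=
    LinearMap.lsum 𝔽 (fun i : ι => F.obj i.1) 𝔽 (fun i => fmapo F i.1 a) with hSmdef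
  set θ : ((i : ι) → F.obj i.1) →ₗ[𝔽] G.obj a :=
    LinearMap.lsum 𝔽 (fun i : ι => F.obj i.1) 𝔽 (fun i => (fmapo G i.1 a).comp (h i.1)) with hθdef
  -- kernel inclusion
  have hker : LinearMap.ker Sm ≤ LinearMap.ker θ := by
    intro e he
    rw [LinearMap.mem_ker] at he ⊢
    set u : ∀ x : P, F.obj x := fun x => if hx : x ∈ D then e ⟨x, hx⟩ else 0 with hu
    have hS0 : Sm e = ∑ x ∈ D, fmapo F x a (u x) := by
      rw [← Finset.sum_coe_sort D (fun x => fmapo F x a (u x))]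
      rw [hSmdef, LinearMap.lsum_apply, LinearMap.sum_apply]
      apply Finset.sum_congr rfl
      intro i _
      simp only [LinearMap.comp_apply, LinearMap.proj_apply, hu]
      rw [dif_pos i.2]
    have hθ : θ e = ∑ x ∈ D, fmapo G x a (h x (u x)) := by
      rw [← Finset.sum_coe_sort D (fun x => fmapo G x a (h x (u x)))]
      rw [hθdef, LinearMap.lsum_apply, LinearMap.sum_apply]
      apply Finset.sum_congr rfl
      intro i _
      simp only [LinearMap.comp_apply, LinearMap.proj_apply, hu]
      rw [dif_pos i.2]
    rw [hθ]
    exact aux_K F G hmono hpo h hcomp D (fun x hx => (hmemD x).mp hx) u (by rw [← hS0, he])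
  -- factor θ through the range of Sm
  let ψ : LinearMap.range Sm →ₗ[𝔽] G.obj a :=
    (Submodule.liftQ (LinearMap.ker Sm) θ hker).comp
      ((LinearMap.quotKerEquivRange Sm).symm : LinearMap.range Sm →ₗ[𝔽] _)
  have hψ : ∀ (e : (i : ι) → F.obj i.1) (hmem : Sm e ∈ LinearMap.range Sm),
      ψ ⟨Sm e, hmem⟩ = θ e := by
    intro e hmem
    have h1 : (LinearMap.quotKerEquivRange Sm).symm ⟨Sm e, hmem⟩
        = (LinearMap.ker Sm).mkQ e := LinearMap.quotKerEquivRange_symm_apply_image Sm e hmem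
    show (Submodule.liftQ (LinearMap.ker Sm) θ hker) ((LinearMap.quotKerEquivRange Sm).symm ⟨Sm e, hmem⟩) = θ e
    rw [h1, Submodule.mkQ_apply, Submodule.liftQ_apply]
  -- projection onto S
  obtain ⟨T, hT⟩ := Submodule.exists_isCompl (LinearMap.range Sm)
  let π : F.obj a →ₗ[𝔽] LinearMap.range Sm := Submodule.linearProjOfIsCompl _ T hT
  let φ₀ : F.obj a →ₗ[𝔽] G.obj a := ψ.comp π
  let δ : F.obj a →ₗ[𝔽] H.obj a :=
    ((f.app a).hom : F.obj a →ₗ[𝔽] H.obj a) - ((g.app a).hom : G.obj a →ₗ[𝔽] H.obj a).comp φ₀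
  obtain ⟨σ, hσ⟩ := ((g.app a).hom : G.obj a →ₗ[𝔽] H.obj a).exists_rightInverse_of_surjective
    (LinearMap.range_eq_top.2 (hgsurj a))
  refine ⟨φ₀ + σ.comp δ, ?_, ?_⟩
  · apply LinearMap.ext; intro v
    have : (g.app a) (σ (δ v)) = δ v := LinearMap.congr_fun hσ (δ v)
    simp only [LinearMap.add_apply, LinearMap.coe_comp, Function.comp_apply, map_add, this]
    show (g.app a) (φ₀ v) + ((f.app a) v - (g.app a) (φ₀ v)) = (f.app a) v
    abel
  · intro x hx
    have hxD : x ∈ D := (hmemD x).mpr hx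
    apply LinearMap.ext; intro v
    -- the image of v under F.map is Sm of a single
    set e : (i : ι) → F.obj i.1 := Pi.single (⟨x, hxD⟩ : ι) v with he
    have hSe : Sm e = F.map (homOfLE hx.le) v := by
      rw [hSmdef, LinearMap.lsum_apply, LinearMap.sum_apply]
      rw [Finset.sum_eq_single (⟨x, hxD⟩ : ι)]
      · simp only [LinearMap.coe_proj, LinearMap.coe_comp, Function.comp_apply, he,
          Pi.single_eq_same]
        rw [fmapo_eq F hx.le]
      · intro j _ hj
        simp only [LinearMap.comp_apply, LinearMap.proj_apply, he, Pi.single_eq_of_ne hj,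
          map_zero]
      · intro hj; exact absurd (Finset.mem_univ _) hj
    have hθe : θ e = G.map (homOfLE hx.le) (h x v) := by
      rw [hθdef, LinearMap.lsum_apply, LinearMap.sum_apply]
      rw [Finset.sum_eq_single (⟨x, hxD⟩ : ι)]
      · simp only [LinearMap.coe_proj, LinearMap.coe_comp, Function.comp_apply, he,
          Pi.single_eq_same]
        rw [fmapo_eq G hx.le]
      · intro j _ hj
        simp only [LinearMap.comp_apply, LinearMap.proj_apply, he, Pi.single_eq_of_ne hj,
          map_zero]
      · intro hj; exact absurd (Finset.mem_univ _) hj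
    have hmem : F.map (homOfLE hx.le) v ∈ LinearMap.range Sm := ⟨e, hSe⟩
    have hπ : π (F.map (homOfLE hx.le) v) = ⟨F.map (homOfLE hx.le) v, hmem⟩ := by
      have := Submodule.linearProjOfIsCompl_apply_left hT ⟨F.map (homOfLE hx.le) v, hmem⟩
      exact this
    have hφ₀ : φ₀ (F.map (homOfLE hx.le) v) = G.map (homOfLE hx.le) (h x v) := by
      show ψ (π (F.map (homOfLE hx.le) v)) = _
      rw [hπ]
      have heq2 : (⟨F.map (homOfLE hx.le) v, hmem⟩ : LinearMap.range Sm) = ⟨Sm e, ⟨e, rfl⟩⟩ :=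
        Subtype.ext hSe.symm
      rw [heq2, hψ e ⟨e, rfl⟩, hθe]
    have hδ : δ (F.map (homOfLE hx.le) v) = 0 := by
      show (f.app a) (F.map (homOfLE hx.le) v)
          - (g.app a) (φ₀ (F.map (homOfLE hx.le) v)) = 0
      rw [hφ₀, sub_eq_zero, nat_app f hx.le v, nat_app g hx.le (h x v)]
      congr 1
      exact (LinearMap.congr_fun (hlift x hx) v).symm
    show φ₀ (F.map (homOfLE hx.le) v) + σ (δ (F.map (homOfLE hx.le) v))
        = G.map (homOfLE hx.le) (h x v)
    rw [hδ, map_zero, add_zero, hφ₀]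
end Aux6
section Final
variable {P : Type*} [DistribLattice P] {𝔽 : Type*} [Field 𝔽]

lemma fmap_id_apply (F : P ⥤ ModuleCat 𝔽) (x : P) (u : F.obj x) :
    F.map (homOfLE (le_refl x)) u = u := by
  rw [show homOfLE (le_refl x) = 𝟙 x from Subsingleton.elim _ _, F.map_id]
  rfl

theorem monomorphic_codegreeOne_projective' {P : Type*} [DistribLattice P]
    (hdf : ∀ a : P, {x : P | x ≤ a}.Finite)
    {𝔽 : Type*} [Field 𝔽] (F : P ⥤ ModuleCat 𝔽)
    (hmono : ∀ {x y : P} (h : x ≤ y), Mono (F.map (homOfLE h)))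
    (hpo : ∀ x y : P, IsPushout (F.map (homOfLE (inf_le_left : x ⊓ y ≤ x)))
      (F.map (homOfLE (inf_le_right : x ⊓ y ≤ y)))
      (F.map (homOfLE (le_sup_left : x ≤ x ⊔ y)))
      (F.map (homOfLE (le_sup_right : y ≤ x ⊔ y)))) :
    Projective F := by
  constructor
  intro E X f e he
  haveI := he
  have hsurj : ∀ p : P, Function.Surjective (e.app p) := fun p =>
    (ModuleCat.epi_iff_surjective (e.app p)).mp inferInstance
  have wf : WellFounded ((· < ·) : P → P → Prop) := aux_wf hdf
  classical
  set body : ∀ a : P, (∀ x, x < a → (F.obj x →ₗ[𝔽] E.obj x)) → (F.obj a →ₗ[𝔽] E.obj a) :=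
    fun a rec =>
      if hex : ∃ φ : F.obj a →ₗ[𝔽] E.obj a,
          (((e.app a).hom : E.obj a →ₗ[𝔽] X.obj a).comp φ = ((f.app a).hom : F.obj a →ₗ[𝔽] X.obj a)) ∧
          ∀ (x : P) (hx : x < a),
            φ.comp ((F.map (homOfLE hx.le)).hom : F.obj x →ₗ[𝔽] F.obj a)
              = ((E.map (homOfLE hx.le)).hom : E.obj x →ₗ[𝔽] E.obj a).comp (rec x hx)
      then hex.choose else 0
    with hbody
  set L : ∀ a : P, F.obj a →ₗ[𝔽] E.obj a := fun a => wf.fix body a with hL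
  have hfix : ∀ a, L a = body a (fun x _ => L x) := fun a => wf.fix_eq body a
  have hLspec : ∀ a : P,
      (((e.app a).hom : E.obj a →ₗ[𝔽] X.obj a).comp (L a) = ((f.app a).hom : F.obj a →ₗ[𝔽] X.obj a)) ∧
      ∀ (x : P) (hx : x < a),
        (L a).comp ((F.map (homOfLE hx.le)).hom : F.obj x →ₗ[𝔽] F.obj a)
          = ((E.map (homOfLE hx.le)).hom : E.obj x →ₗ[𝔽] E.obj a).comp (L x) := by
    intro a
    induction a using WellFounded.induction wf with
    | _ a IH =>
    have hex : ∃ φ : F.obj a →ₗ[𝔽] E.obj a,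
        (((e.app a).hom : E.obj a →ₗ[𝔽] X.obj a).comp φ = ((f.app a).hom : F.obj a →ₗ[𝔽] X.obj a)) ∧
        ∀ (x : P) (hx : x < a),
          φ.comp ((F.map (homOfLE hx.le)).hom : F.obj x →ₗ[𝔽] F.obj a)
            = ((E.map (homOfLE hx.le)).hom : E.obj x →ₗ[𝔽] E.obj a).comp ((fun x _ => L x) x hx) := by
      obtain ⟨φ, hφ1, hφ2⟩ := aux_step hdf hmono hpo f e hsurj a (fun x => L x)
        (fun x hx => (IH x hx).1)
        (fun x y hxy hy => by
          rcases eq_or_lt_of_le hxy with rfl | hlt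
          · apply LinearMap.ext; intro u
            show L x (F.map (homOfLE (le_refl x)) u) = E.map (homOfLE (le_refl x)) (L x u)
            rw [fmap_id_apply F x u, fmap_id_apply E x (L x u)]
          · exact (IH y hy).2 x hlt)
      exact ⟨φ, hφ1, hφ2⟩
    have hfa := hfix a
    rw [hbody] at hfa
    simp only [] at hfa
    rw [dif_pos hex] at hfa
    rw [hfa]
    exact hex.choose_spec
  let ℓ : F ⟶ E :=
    { app := fun a => (ModuleCat.ofHom (L a) : F.obj a ⟶ E.obj a)
      naturality := by
        intro x y φ
        have hxy : x ≤ y := leOfHom φ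
        have hφ : φ = homOfLE hxy := Subsingleton.elim _ _
        subst hφ
        rcases eq_or_lt_of_le hxy with rfl | hlt
        · apply ModuleCat.hom_ext; apply LinearMap.ext; intro u
          show L x (F.map (homOfLE (le_refl x)) u) = E.map (homOfLE (le_refl x)) (L x u)
          rw [fmap_id_apply F x u, fmap_id_apply E x (L x u)]
        · exact ModuleCat.hom_ext ((hLspec y).2 x hlt : _) }
  refine ⟨ℓ, ?_⟩
  apply NatTrans.ext
  funext a
  exact ModuleCat.hom_ext (hLspec a).1
end Final

/-- Let `P` be a down-finite distributive lattice, `𝔽` a field, and `F : P ⥤ Vec_𝔽` a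
functor that is monomorphic and codegree 1 (every square `F(x ⊓ y), F(x), F(y), F(x ⊔ y)`
is a pushout). Then `F` is a projective object of `Fun(P, Vec_𝔽)`. -/
theorem monomorphic_codegreeOne_projective {P : Type*} [DistribLattice P]
    (hdf : ∀ a : P, {x : P | x ≤ a}.Finite)
    {𝔽 : Type*} [Field 𝔽] (F : P ⥤ ModuleCat 𝔽)
    (hmono : ∀ {x y : P} (h : x ≤ y), Mono (F.map (homOfLE h)))
    (hpo : ∀ x y : P, IsPushout (F.map (homOfLE (inf_le_left : x ⊓ y ≤ x)))
      (F.map (homOfLE (inf_le_right : x ⊓ y ≤ y)))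
      (F.map (homOfLE (le_sup_left : x ≤ x ⊔ y)))
      (F.map (homOfLE (le_sup_right : y ≤ x ⊔ y)))) :
    Projective F := by
  exact monomorphic_codegreeOne_projective' hdf F hmono hpo
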